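/- For every nonzero Lie element f of the free associative algebra k⟨X⟩ (i.e., f lies in the Lie subalgebra generated by X under commutators), the leading associative monomial of f with respect to the deg-lex order is an associative Lyndon–Shirshov word. -/

import Mathlib

noncomputable section

variable {X : Type*} [LinearOrder X] (k : Type*) [Field k]

def llt : List X → List X → Prop
  | [], _ => False
  | _ :: _, [] => True
  | a :: u, b :: v => a < b ∨ (a = b ∧ llt u v)

def IsLS (w : List X) : Prop :=
  w ≠ [] ∧ ∀ u v : List X, u ≠ [] → v ≠ [] → w = u ++ v → llt (v ++ u) w

/-- deg-lex order -/
def dlt (u v : List X) : Prop :=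
  u.length < v.length ∨ (u.length = v.length ∧ llt u v)

/-- the free associative algebra with basis the free monoid on X -/
abbrev FA (k : Type*) [Field k] (X : Type*) := MonoidAlgebra k (FreeMonoid X)

/-- the generators x ∈ X inside the free associative algebra -/
def gens : Set (FA k X) := Set.range fun x : X => MonoidAlgebra.single (FreeMonoid.of x) (1 : k)

/-- the leading (deg-lex maximal) monomial of f is w -/
def IsLeading (f : FA k X) (w : List X) : Prop :=
  f.coeff (FreeMonoid.ofList w) ≠ 0 ∧ ∀ v : List X, f.coeff (FreeMonoid.ofList v) ≠ 0 → v = w ∨ dlt v w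

/-- underlying associative word of a nonassociative word -/
def mword : FreeMagma X → List X
  | .of x => [x]
  | .mul a b => mword a ++ mword b

/-- evaluation of a nonassociative word in the free associative algebra
via the commutator bracket -/
def evalM : FreeMagma X → FA k X
  | .of x => MonoidAlgebra.single (FreeMonoid.of x) 1
  | .mul a b => evalM a * evalM b - evalM b * evalM a

/-- nonassociative Lyndon--Shirshov word -/
def IsNLS : FreeMagma X → Prop
  | .of _ => True
  | .mul a b => IsNLS a ∧ IsNLS b ∧ IsLS (mword a ++ mword b) ∧
      (match a with
        | .of _ => True
        | .mul _ a2 => ¬ llt (mword b) (mword a2))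

/-- standard bracketing tree: at each node the right factor is the longest
proper Lyndon--Shirshov suffix -/
def IsStd : FreeMagma X → Prop
  | .of _ => True
  | .mul a b => IsStd a ∧ IsStd b ∧ IsLS (mword a ++ mword b) ∧ IsLS (mword b) ∧
      ∀ s : List X, s ≠ [] → s ≠ mword a ++ mword b → s <:+ mword a ++ mword b →
        IsLS s → s.length ≤ (mword b).length

/-- flattening of a tree of trees -/
def mjoin : FreeMagma (FreeMagma X) → FreeMagma X
  | .of t => t
  | .mul a b => .mul (mjoin a) (mjoin b)

/-- the list of leaves of a binary tree -/
def leaves {α : Type*} : FreeMagma α → List α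
  | .of x => [x]
  | .mul a b => leaves a ++ leaves b

/-- `Occurs s t p` : `s` occurs as a subtree of `t` with exactly the word `p`
to its left -/
def Occurs (s : FreeMagma X) : FreeMagma X → List X → Prop
  | .of x, p => s = .of x ∧ p = []
  | .mul l r, p => (s = .mul l r ∧ p = []) ∨ Occurs s l p ∨
      ∃ q, Occurs s r q ∧ p = mword l ++ q

attribute [local instance 100] LieRing.ofAssociativeRing
/-! ### Part 1 : basic lemmas about the order `llt` -/

section Part1

variable {X : Type*} [LinearOrder X]

@[simp] theorem llt_nil_left (v : List X) : ¬ llt ([] : List X) v := fun h => h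

@[simp] theorem llt_cons_nil (a : X) (u : List X) : llt (a :: u) [] := trivial

theorem llt_cons_cons {a b : X} {u v : List X} :
    llt (a :: u) (b :: v) ↔ a < b ∨ (a = b ∧ llt u v) := Iff.rfl

theorem llt_irrefl : ∀ u : List X, ¬ llt u u
  | [] => fun h => h
  | _ :: u => fun h => h.elim (lt_irrefl _) (fun h' => llt_irrefl u h'.2)

theorem llt_trans : ∀ {u v w : List X}, llt u v → llt v w → llt u w
  | [], _, _, h, _ => absurd h (llt_nil_left _)
  | _ :: _, [], _, _, h => absurd h (llt_nil_left _)
  | _ :: _, _ :: _, [], _, _ => trivial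
  | a :: u, b :: v, c :: w, h₁, h₂ => by
    rcases h₁ with h | ⟨rfl, h₁⟩
    · rcases h₂ with h' | ⟨rfl, h₂⟩
      · exact Or.inl (h.trans h')
      · exact Or.inl h
    · rcases h₂ with h' | ⟨rfl, h₂⟩
      · exact Or.inl h'
      · exact Or.inr ⟨rfl, llt_trans h₁ h₂⟩

theorem llt_asymm {u v : List X} (h : llt u v) : ¬ llt v u :=
  fun h' => llt_irrefl u (llt_trans h h')

theorem llt_trichotomy : ∀ u v : List X, llt u v ∨ u = v ∨ llt v u
  | [], [] => Or.inr (Or.inl rfl)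
  | [], _ :: _ => Or.inr (Or.inr trivial)
  | _ :: _, [] => Or.inl trivial
  | a :: u, b :: v => by
    rcases lt_trichotomy a b with h | rfl | h
    · exact Or.inl (Or.inl h)
    · rcases llt_trichotomy u v with h | rfl | h
      · exact Or.inl (Or.inr ⟨rfl, h⟩)
      · exact Or.inr (Or.inl rfl)
      · exact Or.inr (Or.inr (Or.inr ⟨rfl, h⟩))
    · exact Or.inr (Or.inr (Or.inl h))

theorem llt_append_left : ∀ (u : List X) {a b : List X}, llt (u ++ a) (u ++ b) ↔ llt a b
  | [], _, _ => Iff.rfl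
  | x :: u, a, b => by
    simp only [List.cons_append, llt_cons_cons, lt_irrefl, false_or, true_and,
      llt_append_left u]

/-- If `u < v` and `v` is not a prefix of `u`, the first difference is a genuine letter
difference, so arbitrary extensions stay ordered. -/
theorem llt_extend : ∀ {u v : List X}, llt u v → ¬ v <+: u → ∀ x y : List X,
    llt (u ++ x) (v ++ y)
  | [], _, h, _, _, _ => absurd h (llt_nil_left _)
  | _ :: _, [], _, hp, _, _ => absurd (List.nil_prefix) hp
  | a :: u, b :: v, h, hp, x, y => by
    rcases h with h | ⟨rfl, h⟩
    · exact Or.inl h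
    · refine Or.inr ⟨rfl, llt_extend h (fun hvu => hp ?_) x y⟩
      exact List.cons_prefix_cons.mpr ⟨rfl, hvu⟩

theorem llt_extend_of_le {u v : List X} (h : llt u v) (hl : u.length ≤ v.length)
    (x y : List X) : llt (u ++ x) (v ++ y) := by
  refine llt_extend h (fun hp => ?_) x y
  have := hp.eq_of_length_le (le_trans hl (le_of_eq rfl))
  · subst this; exact llt_irrefl _ h

theorem llt_append_self (u : List X) {x : List X} (hx : x ≠ []) : llt (u ++ x) u := by
  induction u with
  | nil =>
    cases x with
    | nil => exact absurd rfl hx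
    | cons a t => exact trivial
  | cons a u ih => exact Or.inr ⟨rfl, ih⟩

/-- weak version of `llt` -/
def lle (u v : List X) : Prop := llt u v ∨ u = v

theorem lle_refl (u : List X) : lle u u := Or.inr rfl

theorem lle_trans {u v w : List X} (h₁ : lle u v) (h₂ : lle v w) : lle u w := by
  rcases h₁ with h₁ | rfl
  · rcases h₂ with h₂ | rfl
    · exact Or.inl (llt_trans h₁ h₂)
    · exact Or.inl h₁
  · exact h₂

theorem llt_of_llt_of_lle {u v w : List X} (h₁ : llt u v) (h₂ : lle v w) : llt u w := by
  rcases h₂ with h₂ | rfl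
  · exact llt_trans h₁ h₂
  · exact h₁

theorem llt_of_lle_of_llt {u v w : List X} (h₁ : lle u v) (h₂ : llt v w) : llt u w := by
  rcases h₁ with h₁ | rfl
  · exact llt_trans h₁ h₂
  · exact h₂

theorem lle_antisymm {u v : List X} (h₁ : lle u v) (h₂ : lle v u) : u = v := by
  rcases h₁ with h₁ | rfl
  · rcases h₂ with h₂ | rfl
    · exact absurd h₂ (llt_asymm h₁)
    · rfl
  · rfl

theorem lle_of_not_llt {u v : List X} (h : ¬ llt u v) : lle v u := by
  rcases llt_trichotomy u v with h' | rfl | h'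
  · exact absurd h' h
  · exact lle_refl _
  · exact Or.inl h'

theorem lle_total (u v : List X) : lle u v ∨ lle v u := by
  rcases llt_trichotomy u v with h | rfl | h
  · exact Or.inl (Or.inl h)
  · exact Or.inl (lle_refl _)
  · exact Or.inr (Or.inl h)

theorem lle_append {u v x y : List X} (h₁ : lle u v) (hl : u.length = v.length)
    (h₂ : lle x y) : lle (u ++ x) (v ++ y) := by
  rcases h₁ with h₁ | rfl
  · exact Or.inl (llt_extend_of_le h₁ (le_of_eq hl) x y)
  · rcases h₂ with h₂ | rfl
    · exact Or.inl ((llt_append_left u).mpr h₂)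
    · exact lle_refl _

theorem llt_append_of_llt_left {u v x y : List X} (h : llt u v) (hl : u.length = v.length) :
    llt (u ++ x) (v ++ y) := llt_extend_of_le h (le_of_eq hl) x y

/-! #### `dlt` basics -/

theorem dlt_trans {u v w : List X} (h₁ : dlt u v) (h₂ : dlt v w) : dlt u w := by
  rcases h₁ with h₁ | ⟨e₁, l₁⟩
  · rcases h₂ with h₂ | ⟨e₂, l₂⟩
    · exact Or.inl (h₁.trans h₂)
    · exact Or.inl (e₂ ▸ h₁)
  · rcases h₂ with h₂ | ⟨e₂, l₂⟩
    · exact Or.inl (e₁ ▸ h₂)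
    · exact Or.inr ⟨e₁.trans e₂, llt_trans l₁ l₂⟩

theorem dlt_irrefl (u : List X) : ¬ dlt u u := by
  rintro (h | ⟨-, h⟩)
  · exact lt_irrefl _ h
  · exact llt_irrefl _ h

theorem dlt_asymm {u v : List X} (h : dlt u v) : ¬ dlt v u :=
  fun h' => dlt_irrefl u (dlt_trans h h')

/-- weak version of `dlt` -/
def dle (u v : List X) : Prop := dlt u v ∨ u = v

theorem dle_trans {u v w : List X} (h₁ : dle u v) (h₂ : dle v w) : dle u w := by
  rcases h₁ with h₁ | rfl
  · rcases h₂ with h₂ | rfl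
    · exact Or.inl (dlt_trans h₁ h₂)
    · exact Or.inl h₁
  · exact h₂

theorem dle_total (u v : List X) : dle u v ∨ dle v u := by
  rcases Nat.lt_trichotomy u.length v.length with h | h | h
  · exact Or.inl (Or.inl (Or.inl h))
  · rcases llt_trichotomy u v with h' | rfl | h'
    · exact Or.inl (Or.inl (Or.inr ⟨h, h'⟩))
    · exact Or.inl (Or.inr rfl)
    · exact Or.inr (Or.inl (Or.inr ⟨h.symm, h'⟩))
  · exact Or.inr (Or.inl (Or.inl h))

theorem dle_of_lle {u v : List X} (h : lle u v) (hl : u.length = v.length) : dle u v := by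
  rcases h with h | rfl
  · exact Or.inl (Or.inr ⟨hl, h⟩)
  · exact Or.inr rfl

end Part1
/-! ### Part 2 : Lyndon--Shirshov word combinatorics -/

section Part2

variable {X : Type*} [LinearOrder X]

theorem append_eq_append_split {l₁ l₂ l₃ l₄ : List X} (h : l₁ ++ l₂ = l₃ ++ l₄)
    (hl : l₃.length ≤ l₁.length) : ∃ m, l₁ = l₃ ++ m ∧ l₄ = m ++ l₂ := by
  rcases List.append_eq_append_iff.mp h with ⟨a, ha1, ha2⟩ | ⟨m, h1, h2⟩
  · have ha : a = [] := by
      have := congrArg List.length ha1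
      simp only [List.length_append] at this
      have : a.length = 0 := by omega
      exact List.eq_nil_of_length_eq_zero this
    subst ha
    exact ⟨[], by simpa using ha1.symm, by simpa using ha2.symm⟩
  · exact ⟨m, h1, h2⟩

theorem suffix_right_of_le {s x y : List X} (h : s <:+ x ++ y) (hl : s.length ≤ y.length) :
    s <:+ y := by
  obtain ⟨t, ht⟩ := h
  have hxt : x.length ≤ t.length := by
    have := congrArg List.length ht
    simp only [List.length_append] at this
    omega
  obtain ⟨m, hm1, hm2⟩ := append_eq_append_split ht hxt
  exact ⟨m, hm2.symm⟩

theorem suffix_split_of_gt {s x y : List X} (h : s <:+ x ++ y) (hl : y.length < s.length) :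
    ∃ s', s' <:+ x ∧ s = s' ++ y ∧ s' ≠ [] := by
  obtain ⟨t, ht⟩ := h
  have hlen := congrArg List.length ht
  simp only [List.length_append] at hlen
  obtain ⟨m, hm1, hm2⟩ := append_eq_append_split ht.symm (by omega)
  refine ⟨m, ⟨t, hm1.symm⟩, hm2, ?_⟩
  intro hm
  subst hm
  have := congrArg List.length hm2
  simp only [List.nil_append] at this
  omega

theorem suffix_eq_of_length {s s' w : List X} (h : s <:+ w) (h' : s' <:+ w)
    (hl : s.length = s'.length) : s = s' := by
  obtain ⟨t, rfl⟩ := h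
  obtain ⟨t', ht'⟩ := h'
  have hlen := congrArg List.length ht'
  simp only [List.length_append] at hlen
  have htt : t'.length = t.length := by omega
  have := List.drop_left (l₁ := t) (l₂ := s)
  rw [← ht', ← htt, List.drop_left] at this
  exact this.symm

theorem isLS_singleton (x : X) : IsLS [x] := by
  refine ⟨by simp, ?_⟩
  intro u v hu hv huv
  have := congrArg List.length huv
  simp only [List.length_append, List.length_cons, List.length_nil] at this
  rcases u with _ | ⟨a, u⟩
  · exact absurd rfl hu
  rcases v with _ | ⟨b, v⟩
  · exact absurd rfl hv
  simp only [List.length_cons] at this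
  omega

theorem LS_split_lt {a b : List X} (h : IsLS (a ++ b)) (ha : a ≠ []) (hb : b ≠ []) :
    llt b a := by
  have rot := h.2 a b ha hb rfl
  rcases llt_trichotomy b a with h' | rfl | h'
  · exact h'
  · exact absurd rot (llt_irrefl _)
  · by_cases hp : b <+: a
    · obtain ⟨t, rfl⟩ := hp
      rcases eq_or_ne t [] with rfl | ht
      · rw [List.append_nil] at rot
        exact absurd rot (llt_irrefl _)
      · have h1 : llt (b ++ t) (t ++ b) := by
          have h1' := rot
          rw [List.append_assoc b t b] at h1'
          exact (llt_append_left b).mp h1'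
        have h2 := h.2 b (t ++ b) hb (by simp [ht]) (List.append_assoc b t b)
        have h3 : llt ((b ++ t) ++ b) ((t ++ b) ++ b) :=
          llt_append_of_llt_left h1 (by simp [Nat.add_comm])
        exact absurd (llt_trans h2 h3) (llt_irrefl _)
    · exact absurd (llt_extend h' hp b a) (llt_asymm rot)

theorem LS_suffix_llt {w s : List X} (hw : IsLS w) (hs : s <:+ w) (hne : s ≠ w)
    (h0 : s ≠ []) : llt s w := by
  obtain ⟨u, rfl⟩ := hs
  have hu : u ≠ [] := by rintro rfl; exact hne rfl
  have rot := hw.2 u s hu h0 rfl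
  rcases llt_trichotomy s (u ++ s) with h | he | h
  · exact h
  · exfalso
    have := congrArg List.length he
    simp only [List.length_append] at this
    have hu0 : u.length = 0 := by omega
    exact hu (List.eq_nil_of_length_eq_zero hu0)
  · exfalso
    by_cases hp : s <+: u ++ s
    · obtain ⟨x, hx⟩ := hp
      have hxne : x ≠ [] := by
        rintro rfl
        rw [List.append_nil] at hx
        have := congrArg List.length hx
        simp only [List.length_append] at this
        exact hu (List.eq_nil_of_length_eq_zero (by omega))
      have rot' := hw.2 s x h0 hxne hx.symm
      have hux : llt u x := by
        have h' : llt (s ++ u) (s ++ x) := by rw [hx]; exact rot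
        exact (llt_append_left s).mp h'
      have hlen : u.length = x.length := by
        have := congrArg List.length hx
        simp only [List.length_append] at this
        omega
      have h'' : llt (u ++ s) (x ++ s) := llt_append_of_llt_left hux hlen
      exact llt_irrefl _ (llt_trans h'' rot')
    · have h' := llt_extend h hp [] u
      rw [List.append_nil] at h'
      exact llt_irrefl _ (llt_trans h' rot)

theorem llt_rot_concat {u v : List X} (hu : IsLS u) (hv : IsLS v) (h : llt v u) :
    llt (v ++ u) (u ++ v) := by
  by_cases hp : u <+: v
  · obtain ⟨t, rfl⟩ := hp
    have ht : t ≠ [] := by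
      rintro rfl
      rw [List.append_nil] at h
      exact absurd h (llt_irrefl _)
    have h' := hv.2 u t hu.1 ht rfl
    have goal' : llt (u ++ (t ++ u)) (u ++ (u ++ t)) := (llt_append_left u).mpr h'
    simpa only [List.append_assoc] using goal'
  · exact llt_extend h hp u v

theorem LS_concat {u v : List X} (hu : IsLS u) (hv : IsLS v) (h : llt v u) :
    IsLS (u ++ v) := by
  have B : llt v (u ++ v) := by
    by_cases hp : u <+: v
    · obtain ⟨t, rfl⟩ := hp
      have ht : t ≠ [] := by
        rintro rfl
        rw [List.append_nil] at h
        exact absurd h (llt_irrefl _)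
      have h' : llt t (u ++ t) :=
        LS_suffix_llt hv ⟨u, rfl⟩
          (by intro he; have := congrArg List.length he;
              simp only [List.length_append] at this;
              exact hu.1 (List.eq_nil_of_length_eq_zero (by omega))) ht
      exact (llt_append_left u).mpr h'
    · have h' := llt_extend h hp [] v
      rwa [List.append_nil] at h'
  refine ⟨by simp [hu.1], ?_⟩
  intro c d hc hd hcd
  rcases le_or_gt c.length u.length with hl | hl
  · obtain ⟨m, hm1, hm2⟩ := append_eq_append_split hcd hl
    rcases eq_or_ne m [] with rfl | hm
    · rw [List.append_nil] at hm1
      rw [List.nil_append] at hm2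
      subst hm2
      rw [← hm1]
      exact llt_rot_concat hu hv h
    · have hcne : c.length ≠ 0 := by
        intro h0
        exact hc (List.eq_nil_of_length_eq_zero h0)
      have hlm : u.length = c.length + m.length := by
        rw [hm1]; simp [List.length_append]
      have hmu : llt m u :=
        LS_suffix_llt hu ⟨c, hm1.symm⟩
          (by intro he; rw [he] at hlm; omega) hm
      have hnp : ¬ u <+: m := by
        intro hp
        have h1 := hp.length_le
        omega
      have main := llt_extend hmu hnp (v ++ c) v
      subst hm2
      subst hm1
      simp only [List.append_assoc] at main ⊢
      exact main
  · obtain ⟨m, hm1, hm2⟩ := append_eq_append_split hcd.symm (le_of_lt hl)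
    have hclen : c.length = u.length + m.length := by
      rw [hm1]; simp [List.length_append]
    have hm : m ≠ [] := by
      rintro rfl
      simp only [List.length_nil] at hclen
      omega
    have hmne : m.length ≠ 0 := by
      intro h0
      exact hm (List.eq_nil_of_length_eq_zero h0)
    have hvlen : v.length = m.length + d.length := by
      rw [hm2]; simp [List.length_append]
    have hdv : llt d v :=
      LS_suffix_llt hv ⟨m, hm2.symm⟩ (by intro he; rw [he] at hvlen; omega) hd
    have hnp : ¬ v <+: d := by
      intro hp
      have h1 := hp.length_le
      omega
    have A := llt_extend hdv hnp (u ++ m) []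
    rw [List.append_nil] at A
    have main := llt_trans A B
    subst hm1
    subst hm2
    simpa only [List.append_assoc] using main

theorem mword_ne_nil : ∀ t : FreeMagma X, mword t ≠ []
  | .of x => by simp [mword]
  | .mul a b => by
    simp only [mword]
    simp [mword_ne_nil a]

theorem mword_mul (a b : FreeMagma X) : mword (FreeMagma.mul a b) = mword a ++ mword b := rfl

theorem mword_of (x : X) : mword (FreeMagma.of x) = [x] := rfl

theorem nls_isLS : ∀ {t : FreeMagma X}, IsNLS t → IsLS (mword t)
  | .of x, _ => isLS_singleton x
  | .mul _ _, h => h.2.2.1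

/-- In an NLS tree `mul a b`, every proper nonempty suffix of the word is `≤ mword b`. -/
theorem nls_suffix_lle (a : FreeMagma X) : ∀ (b : FreeMagma X), IsNLS (FreeMagma.mul a b) →
    ∀ s : List X, s ≠ [] → s <:+ mword a ++ mword b → s ≠ mword a ++ mword b →
    lle s (mword b) := by
  have common : ∀ (b : FreeMagma X) (α : List X), IsNLS b → ∀ s : List X, s ≠ [] →
      s <:+ α ++ mword b → s.length ≤ (mword b).length → lle s (mword b) := by
    intro b α hb s h0 hs hl
    have hsb : s <:+ mword b := suffix_right_of_le hs hl
    rcases eq_or_ne s (mword b) with rfl | hne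
    · exact lle_refl _
    · exact Or.inl (LS_suffix_llt (nls_isLS hb) hsb hne h0)
  induction a using FreeMagma.rec with
  | of x =>
    intro b h s h0 hs hne
    refine common b _ h.2.1 s h0 hs ?_
    have h1 := hs.length_le
    simp only [List.length_append, mword_of, List.length_cons, List.length_nil] at h1
    by_contra hgt
    push_neg at hgt
    refine hne (suffix_eq_of_length hs (List.suffix_refl _) ?_)
    simp only [List.length_append, mword_of, List.length_cons, List.length_nil]
    omega
  | mul a1 a2 ih1 _ =>
    intro b h s h0 hs hne
    rcases le_or_gt s.length (mword b).length with hl | hl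
    · exact common b _ h.2.1 s h0 hs hl
    · obtain ⟨s', hs'x, rfl, hs'ne⟩ := suffix_split_of_gt hs hl
      have hs'nfull : s' ≠ mword (FreeMagma.mul a1 a2) := by
        intro he
        exact hne (by rw [he])
      have h2 : lle s' (mword a2) := ih1 a2 h.1 s' hs'ne hs'x hs'nfull
      have h3 : lle (mword a2) (mword b) := lle_of_not_llt h.2.2.2
      have h4 : lle s' (mword b) := lle_trans h2 h3
      rcases h4 with h4 | rfl
      · by_cases hp : mword b <+: s'
        · obtain ⟨r, rfl⟩ := hp
          have hr : r ≠ [] := by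
            rintro rfl
            rw [List.append_nil] at h4
            exact absurd h4 (llt_irrefl _)
          refine Or.inl ?_
          rw [List.append_assoc]
          exact llt_append_self (mword b) (by simp [hr])
        · have h5 := llt_extend h4 hp (mword b) []
          rw [List.append_nil] at h5
          exact Or.inl h5
      · exact Or.inl (llt_append_self (mword b) (mword_ne_nil b))

/-- In an NLS tree `mul a b`, `mword b` is the longest proper LS suffix. -/
theorem nls_max_suffix {a b : FreeMagma X} (h : IsNLS (FreeMagma.mul a b)) {s : List X}
    (h0 : s ≠ []) (hne : s ≠ mword a ++ mword b) (hs : s <:+ mword a ++ mword b)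
    (hLS : IsLS s) : s.length ≤ (mword b).length := by
  by_contra hgt
  push_neg at hgt
  obtain ⟨s', hs'x, rfl, hs'ne⟩ := suffix_split_of_gt hs hgt
  have h1 : llt (mword b) s' := LS_split_lt hLS hs'ne (mword_ne_nil b)
  have h2 : lle s' (mword b) := by
    rcases a with x | ⟨a1, a2⟩
    · -- a = of x : s' is a nonempty suffix of [x], so s' = [x] and s = whole word
      exfalso
      have hp1 := hs'x.length_le
      have hp2 := List.length_pos_iff.mpr hs'ne
      have hx : s' = mword (FreeMagma.of x) := by
        refine suffix_eq_of_length hs'x (List.suffix_refl _) ?_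
        simp only [mword_of, List.length_cons, List.length_nil] at hp1 ⊢
        omega
      exact hne (by rw [hx])
    · have hs'nfull : s' ≠ mword (FreeMagma.mul a1 a2) := by
        intro he
        exact hne (by rw [he])
      have h2' : lle s' (mword a2) := nls_suffix_lle a1 a2 h.1 s' hs'ne hs'x hs'nfull
      exact lle_trans h2' (lle_of_not_llt h.2.2.2)
  exact llt_irrefl _ (llt_of_llt_of_lle h1 h2)

theorem nls_mword_inj : ∀ {t t' : FreeMagma X}, IsNLS t → IsNLS t' →
    mword t = mword t' → t = t'
  | .of x, .of y, _, _, h => by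
    simp only [mword_of, List.cons.injEq, and_true] at h
    rw [h]
  | .of x, .mul a b, _, _, h => by
    exfalso
    have := congrArg List.length h
    simp only [mword_of, mword_mul, List.length_append, List.length_cons,
      List.length_nil] at this
    have ha := List.length_pos_iff.mpr (mword_ne_nil a)
    have hb := List.length_pos_iff.mpr (mword_ne_nil b)
    omega
  | .mul a b, .of y, _, _, h => by
    exfalso
    have := congrArg List.length h
    simp only [mword_of, mword_mul, List.length_append, List.length_cons,
      List.length_nil] at this
    have ha := List.length_pos_iff.mpr (mword_ne_nil a)
    have hb := List.length_pos_iff.mpr (mword_ne_nil b)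
    omega
  | .mul a b, .mul a' b', h, h', he => by
    simp only [mword_mul] at he
    have ha := List.length_pos_iff.mpr (mword_ne_nil a)
    have ha' := List.length_pos_iff.mpr (mword_ne_nil a')
    have hlen := congrArg List.length he
    simp only [List.length_append] at hlen
    have hb1 : (mword b').length ≤ (mword b).length := by
      refine nls_max_suffix h (mword_ne_nil b') ?_ ?_ (nls_isLS h'.2.1)
      · intro hfull
        have := congrArg List.length hfull
        simp only [List.length_append] at this
        omega
      · rw [he]; exact ⟨mword a', rfl⟩
    have hb2 : (mword b).length ≤ (mword b').length := by
      refine nls_max_suffix h' (mword_ne_nil b) ?_ ?_ (nls_isLS h.2.1)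
      · intro hfull
        have := congrArg List.length hfull
        simp only [List.length_append] at this
        omega
      · rw [← he]; exact ⟨mword a, rfl⟩
    have hbb : mword b = mword b' := by
      refine suffix_eq_of_length ⟨mword a, rfl⟩ ?_ (le_antisymm hb2 hb1)
      rw [he]; exact ⟨mword a', rfl⟩
    have haa : mword a = mword a' := by
      rw [hbb] at he
      exact List.append_cancel_right he
    rw [nls_mword_inj h.1 h'.1 haa, nls_mword_inj h.2.1 h'.2.1 hbb]

end Part2
/-! ### Part 3 : coefficients in the free associative algebra -/

section Part3

variable {X : Type*} [LinearOrder X] (k : Type*) [Field k]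

theorem fm_mul_eq (u v : List X) :
    FreeMonoid.ofList u * FreeMonoid.ofList v = FreeMonoid.ofList (u ++ v) := rfl

theorem fm_ofList_toList (a : FreeMonoid X) : FreeMonoid.ofList (FreeMonoid.toList a) = a := rfl

theorem fm_inj {u v : List X} (h : FreeMonoid.ofList u = FreeMonoid.ofList v) : u = v :=
  FreeMonoid.ofList.injective h

theorem mul_ne_zero_exists {f g : FA k X} {x : FreeMonoid X} (h : (f * g).coeff x ≠ 0) :
    ∃ a b, f.coeff a ≠ 0 ∧ g.coeff b ≠ 0 ∧ a * b = x := by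
  classical
  rw [MonoidAlgebra.coeff_mul] at h
  by_contra hn
  push_neg at hn
  apply h
  rw [Finsupp.sum]
  apply Finset.sum_eq_zero
  intro a ha
  rw [Finsupp.sum]
  apply Finset.sum_eq_zero
  intro b hb
  rw [if_neg]
  exact hn a b (Finsupp.mem_support_iff.mp ha) (Finsupp.mem_support_iff.mp hb)

theorem mul_apply_unique {f g : FA k X} {a₀ b₀ : FreeMonoid X}
    (h : ∀ a b, f.coeff a ≠ 0 → g.coeff b ≠ 0 → a * b = a₀ * b₀ → a = a₀ ∧ b = b₀) :
    (f * g).coeff (a₀ * b₀) = f.coeff a₀ * g.coeff b₀ := by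
  classical
  rw [MonoidAlgebra.coeff_mul]
  rw [Finsupp.sum]
  by_cases ha : f.coeff a₀ = 0
  · rw [ha, zero_mul]
    apply Finset.sum_eq_zero
    intro a haS
    rw [Finsupp.sum]
    apply Finset.sum_eq_zero
    intro b hbS
    rw [if_neg]
    intro hab
    obtain ⟨rfl, rfl⟩ :=
      h a b (Finsupp.mem_support_iff.mp haS) (Finsupp.mem_support_iff.mp hbS) hab
    exact (Finsupp.mem_support_iff.mp haS) ha
  · have haS : a₀ ∈ f.coeff.support := Finsupp.mem_support_iff.mpr ha
    rw [Finset.sum_eq_single a₀]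
    · rw [Finsupp.sum]
      by_cases hb : g.coeff b₀ = 0
      · rw [hb, mul_zero]
        apply Finset.sum_eq_zero
        intro b hbS
        rw [if_neg]
        intro hab
        obtain ⟨-, rfl⟩ := h a₀ b ha (Finsupp.mem_support_iff.mp hbS) hab
        exact (Finsupp.mem_support_iff.mp hbS) hb
      · rw [Finset.sum_eq_single b₀]
        · rw [if_pos rfl]
        · intro b hbS hne
          rw [if_neg]
          intro hab
          exact hne (h a₀ b ha (Finsupp.mem_support_iff.mp hbS) hab).2
        · intro hbs
          exact absurd (Finsupp.mem_support_iff.mpr hb) hbs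
    · intro a haS' hne
      rw [Finsupp.sum]
      apply Finset.sum_eq_zero
      intro b hbS
      rw [if_neg]
      intro hab
      exact hne (h a b (Finsupp.mem_support_iff.mp haS') (Finsupp.mem_support_iff.mp hbS) hab).1
    · intro h'
      exact absurd haS h'

/-- all monomials of `f` are permutations of `w` which are `≤ w` -/
def Bounded (f : FA k X) (w : List X) : Prop :=
  ∀ m : List X, f.coeff (FreeMonoid.ofList m) ≠ 0 → m.Perm w ∧ lle m w

variable {k}

theorem bounded_commutator {A B : FA k X} {α β : List X} (hα : α ≠ []) (hβ : β ≠ [])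
    (hA : Bounded k A α) (hB : Bounded k B β) (hr : llt (β ++ α) (α ++ β)) :
    Bounded k (A * B - B * A) (α ++ β) ∧
      (A * B - B * A).coeff (FreeMonoid.ofList (α ++ β)) =
        A.coeff (FreeMonoid.ofList α) * B.coeff (FreeMonoid.ofList β) := by
  constructor
  · intro m hm
    rw [MonoidAlgebra.coeff_sub, Finsupp.sub_apply] at hm
    have hor : (A * B).coeff (FreeMonoid.ofList m) ≠ 0 ∨ (B * A).coeff (FreeMonoid.ofList m) ≠ 0 := by
      by_contra hc
      push_neg at hc
      rw [hc.1, hc.2, sub_zero] at hm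
      exact hm rfl
    rcases hor with hne | hne
    · obtain ⟨a, b, ha, hb, hab⟩ := mul_ne_zero_exists k hne
      have hA' := hA (FreeMonoid.toList a) ha
      have hB' := hB (FreeMonoid.toList b) hb
      have hm' : m = FreeMonoid.toList a ++ FreeMonoid.toList b := by
        apply fm_inj
        rw [← fm_mul_eq]
        exact hab.symm
      subst hm'
      refine ⟨hA'.1.append hB'.1, lle_append hA'.2 hA'.1.length_eq hB'.2⟩
    · obtain ⟨b, a, hb, ha, hab⟩ := mul_ne_zero_exists k hne
      have hA' := hA (FreeMonoid.toList a) ha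
      have hB' := hB (FreeMonoid.toList b) hb
      have hm' : m = FreeMonoid.toList b ++ FreeMonoid.toList a := by
        apply fm_inj
        rw [← fm_mul_eq]
        exact hab.symm
      subst hm'
      refine ⟨(hB'.1.append hA'.1).trans List.perm_append_comm, ?_⟩
      exact Or.inl (llt_of_lle_of_llt (lle_append hB'.2 hB'.1.length_eq hA'.2) hr)
  · rw [MonoidAlgebra.coeff_sub, Finsupp.sub_apply]
    have top1 : (A * B).coeff (FreeMonoid.ofList (α ++ β)) =
        A.coeff (FreeMonoid.ofList α) * B.coeff (FreeMonoid.ofList β) := by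
      rw [← fm_mul_eq]
      apply mul_apply_unique
      intro a b ha hb hab
      have hA' := hA (FreeMonoid.toList a) ha
      have hB' := hB (FreeMonoid.toList b) hb
      have hab' : FreeMonoid.toList a ++ FreeMonoid.toList b = α ++ β := by
        apply fm_inj
        rw [← fm_mul_eq]
        exact hab
      obtain ⟨h1, h2⟩ := List.append_inj hab' hA'.1.length_eq
      constructor
      · rw [← fm_ofList_toList a, h1]
      · rw [← fm_ofList_toList b, h2]
    have top2 : (B * A).coeff (FreeMonoid.ofList (α ++ β)) = 0 := by
      by_contra hne
      obtain ⟨b, a, hb, ha, hab⟩ := mul_ne_zero_exists k hne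
      have hA' := hA (FreeMonoid.toList a) ha
      have hB' := hB (FreeMonoid.toList b) hb
      have hab' : FreeMonoid.toList b ++ FreeMonoid.toList a = α ++ β := by
        apply fm_inj
        rw [← fm_mul_eq]
        exact hab
      have h1 : lle (FreeMonoid.toList b ++ FreeMonoid.toList a) (β ++ α) :=
        lle_append hB'.2 hB'.1.length_eq hA'.2
      rw [hab'] at h1
      exact llt_irrefl _ (llt_of_lle_of_llt h1 hr)
    rw [top1, top2, sub_zero]

theorem evalM_of_def (x : X) :
    evalM k (FreeMagma.of x) = MonoidAlgebra.single (FreeMonoid.of x) 1 := rfl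

theorem evalM_mul_def (a b : FreeMagma X) :
    evalM k (FreeMagma.mul a b) = evalM k a * evalM k b - evalM k b * evalM k a := rfl

theorem evalM_mul_lie (a b : FreeMagma X) :
    evalM k (FreeMagma.mul a b) = ⁅evalM k a, evalM k b⁆ := by
  rw [Ring.lie_def]
  rfl

theorem evalM_nls : ∀ {t : FreeMagma X}, IsNLS t →
    Bounded k (evalM k t) (mword t) ∧ (evalM k t).coeff (FreeMonoid.ofList (mword t)) = 1
  | .of x, _ => by
    classical
    constructor
    · intro m hm
      rw [evalM_of_def, MonoidAlgebra.single_apply] at hm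
      have : FreeMonoid.of x = FreeMonoid.ofList m := by
        by_contra hc
        rw [if_neg hc] at hm
        exact hm rfl
      have hm' : m = [x] := (fm_inj this.symm)
      subst hm'
      exact ⟨List.Perm.refl _, lle_refl _⟩
    · rw [evalM_of_def, MonoidAlgebra.single_apply,
        if_pos (show FreeMonoid.of x = FreeMonoid.ofList (mword (FreeMagma.of x)) from rfl)]
  | .mul a b, h => by
    have hA := evalM_nls h.1
    have hB := evalM_nls h.2.1
    have hrot : llt (mword b ++ mword a) (mword a ++ mword b) :=
      h.2.2.1.2 (mword a) (mword b) (mword_ne_nil a) (mword_ne_nil b) rfl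
    have hbc := bounded_commutator (mword_ne_nil a) (mword_ne_nil b) hA.1 hB.1 hrot
    rw [mword_mul, evalM_mul_def]
    exact ⟨hbc.1, by rw [hbc.2, hA.2, hB.2, one_mul]⟩

theorem bounded_lie {p q : FreeMagma X} (hp : IsNLS p) (hq : IsNLS q)
    (h : llt (mword q) (mword p)) :
    Bounded k ⁅evalM k p, evalM k q⁆ (mword p ++ mword q) := by
  rw [Ring.lie_def]
  exact (bounded_commutator (mword_ne_nil p) (mword_ne_nil q) (evalM_nls hp).1
    (evalM_nls hq).1 (llt_rot_concat (nls_isLS hp) (nls_isLS hq) h)).1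

end Part3
/-! ### Part 4 : span machinery and the termination measure -/

section Part4

variable {X : Type*} [LinearOrder X] (k : Type*) [Field k]

/-- the set of evaluations of NLS trees whose word is a permutation of `z` -/
def SP (z : List X) : Set (FA k X) :=
  evalM k '' {s : FreeMagma X | IsNLS s ∧ (mword s).Perm z}

theorem SP_congr {z z' : List X} (h : z.Perm z') : SP k z = SP k z' := by
  unfold SP
  have : {s : FreeMagma X | IsNLS s ∧ (mword s).Perm z} =
      {s : FreeMagma X | IsNLS s ∧ (mword s).Perm z'} := by
    ext s
    simp only [Set.mem_setOf_eq]
    exact and_congr_right fun _ => ⟨fun p => p.trans h, fun p => p.trans h.symm⟩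
  rw [this]

theorem rep_of_mem_span {S : Set (FreeMagma X)} {g : FA k X}
    (hg : g ∈ Submodule.span k (evalM k '' S)) :
    ∃ l : FreeMagma X →₀ k, (∀ s ∈ l.support, s ∈ S) ∧
      g = l.sum fun s c => c • evalM k s := by
  obtain ⟨l, hl, rfl⟩ := (Finsupp.mem_span_image_iff_linearCombination k).mp hg
  exact ⟨l, fun s hs => (Finsupp.mem_supported k l).mp hl hs,
    (Finsupp.linearCombination_apply _ _)⟩

theorem finset_exists_max {β : Type*} (r : List X → List X → Prop)
    (htot : ∀ a b, r a b ∨ r b a) (htr : ∀ {a b c}, r a b → r b c → r a c)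
    (F : Finset β) (f : β → List X) :
    F.Nonempty → ∃ s₀ ∈ F, ∀ s ∈ F, r (f s) (f s₀) := by
  classical
  induction F using Finset.induction_on with
  | empty => intro h; exact absurd h (by simp)
  | @insert a F' ha ih =>
    intro _
    rcases F'.eq_empty_or_nonempty with rfl | hne
    · refine ⟨a, by simp, ?_⟩
      intro s hs
      simp only [Finset.mem_insert, Finset.notMem_empty, or_false] at hs
      subst hs
      exact (htot (f s) (f s)).elim id id
    · obtain ⟨s₀, hs₀, hmax⟩ := ih hne
      rcases htot (f a) (f s₀) with h | h
      · refine ⟨s₀, Finset.mem_insert_of_mem hs₀, ?_⟩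
        intro s hs
        rcases Finset.mem_insert.mp hs with rfl | hs
        · exact h
        · exact hmax s hs
      · refine ⟨a, Finset.mem_insert_self _ _, ?_⟩
        intro s hs
        rcases Finset.mem_insert.mp hs with rfl | hs
        · exact (htot (f s) (f s)).elim id id
        · exact htr (hmax s hs) h

variable {k}

theorem rep_words_bounded {l : FreeMagma X →₀ k} {z x : List X}
    (hnls : ∀ s ∈ l.support, IsNLS s ∧ (mword s).Perm z)
    (hx : ∀ m : List X, (l.sum fun s c => c • evalM k s).coeff (FreeMonoid.ofList m) ≠ 0 →
      lle m x) :
    ∀ s ∈ l.support, lle (mword s) x := by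
  intro s hs
  have hFne : l.support.Nonempty := ⟨s, hs⟩
  obtain ⟨s₀, hs₀, hmax⟩ :=
    finset_exists_max lle lle_total (fun h1 h2 => lle_trans h1 h2) l.support mword hFne
  have hg : (l.sum fun s c => c • evalM k s).coeff (FreeMonoid.ofList (mword s₀)) = l s₀ := by
    rw [Finsupp.sum, MonoidAlgebra.coeff_sum, Finsupp.finset_sum_apply]
    rw [Finset.sum_eq_single s₀]
    · rw [MonoidAlgebra.coeff_smul_apply, (evalM_nls (hnls s₀ hs₀).1).2, smul_eq_mul, mul_one]
    · intro t ht htne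
      rw [MonoidAlgebra.coeff_smul_apply]
      have h0 : (evalM k t).coeff (FreeMonoid.ofList (mword s₀)) = 0 := by
        by_contra hc
        have h1 := ((evalM_nls (hnls t ht).1).1) (mword s₀) hc
        have h2 := hmax t ht
        have heq := lle_antisymm h1.2 h2
        exact htne (nls_mword_inj (hnls t ht).1 (hnls s₀ hs₀).1 heq.symm)
      rw [h0, smul_zero]
    · intro hno
      exact absurd hs₀ hno
  have hne0 : l s₀ ≠ 0 := Finsupp.mem_support_iff.mp hs₀
  have hs₀x : lle (mword s₀) x := hx (mword s₀) (by rw [hg]; exact hne0)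
  exact lle_trans (hmax s hs) hs₀x

open Classical in
/-- number of permutations of `z` which are `≤ z` -/
noncomputable def cnt (z : List X) : ℕ :=
  (z.permutations.toFinset.filter (fun w => lle w z)).card

theorem perm_toFinset_eq {z z' : List X} (h : z.Perm z') :
    z.permutations.toFinset = z'.permutations.toFinset := by
  ext w
  simp only [List.mem_toFinset, List.mem_permutations]
  exact ⟨fun p => p.trans h, fun p => p.trans h.symm⟩

theorem cnt_lt {z z' : List X} (hperm : z'.Perm z) (hlt : llt z' z) : cnt z' < cnt z := by
  classical
  unfold cnt
  apply Finset.card_lt_card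
  rw [Finset.ssubset_iff_of_subset]
  · refine ⟨z, ?_, ?_⟩
    · simp only [Finset.mem_filter, List.mem_toFinset, List.mem_permutations]
      exact ⟨List.Perm.refl z, lle_refl z⟩
    · simp only [Finset.mem_filter, List.mem_toFinset, List.mem_permutations, not_and]
      intro _
      intro hle
      exact llt_irrefl _ (llt_of_lle_of_llt hle hlt)
  · intro w hw
    simp only [Finset.mem_filter, List.mem_toFinset, List.mem_permutations] at hw ⊢
    exact ⟨hw.1.trans hperm, lle_trans hw.2 (Or.inl hlt)⟩

/-- the inner termination measure for the rewriting of a bracket of two NLS trees -/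
noncomputable def imeas (p q : FreeMagma X) : ℕ :=
  cnt (mword p ++ mword q) * ((mword p ++ mword q).length + 1) + (mword p).length

theorem imeas_lt_of_llt {p q p' q' : FreeMagma X}
    (hperm : (mword p' ++ mword q').Perm (mword p ++ mword q))
    (hlt : llt (mword p' ++ mword q') (mword p ++ mword q)) :
    imeas p' q' < imeas p q := by
  have hlen := hperm.length_eq
  have hc := cnt_lt hperm hlt
  unfold imeas
  rw [hlen]
  set L := (mword p ++ mword q).length with hL
  have h1 : (mword p').length ≤ L := by
    rw [← hlen]
    simp [List.length_append]
  calc cnt (mword p' ++ mword q') * (L + 1) + (mword p').length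
      < (cnt (mword p' ++ mword q') + 1) * (L + 1) := by
        rw [add_mul, one_mul]; omega
    _ ≤ cnt (mword p ++ mword q) * (L + 1) := Nat.mul_le_mul_right _ hc
    _ ≤ cnt (mword p ++ mword q) * (L + 1) + (mword p).length := Nat.le_add_right _ _

theorem imeas_lt_of_left {p q p' q' : FreeMagma X}
    (heq : mword p' ++ mword q' = mword p ++ mword q)
    (hlt : (mword p').length < (mword p).length) : imeas p' q' < imeas p q := by
  unfold imeas
  rw [heq]
  omega

theorem lie_mem_span_of {S T U : Set (FA k X)} {x y : FA k X}
    (hx : x ∈ Submodule.span k S) (hy : y ∈ Submodule.span k T)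
    (h : ∀ a ∈ S, ∀ b ∈ T, ⁅a, b⁆ ∈ Submodule.span k U) :
    ⁅x, y⁆ ∈ Submodule.span k U := by
  induction hx using Submodule.span_induction with
  | mem a ha =>
    induction hy using Submodule.span_induction with
    | mem b hb => exact h a ha b hb
    | zero => rw [lie_zero]; exact Submodule.zero_mem _
    | add y z _ _ ihy ihz => rw [lie_add]; exact Submodule.add_mem _ ihy ihz
    | smul c y _ ihy => rw [lie_smul]; exact Submodule.smul_mem _ c ihy
  | zero => rw [zero_lie]; exact Submodule.zero_mem _
  | add x z _ _ ihx ihz => rw [add_lie]; exact Submodule.add_mem _ ihx ihz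
  | smul c x _ ihx => rw [smul_lie]; exact Submodule.smul_mem _ c ihx

end Part4
/-! ### Part 5 : the rewriting theorem (Shirshov's algorithm) -/

section Part5

variable {X : Type*} [LinearOrder X] (k : Type*) [Field k]

theorem lie_finset_sum {ι : Type*} (t : Finset ι) (f : ι → FA k X) (y : FA k X) :
    ⁅∑ i ∈ t, f i, y⁆ = ∑ i ∈ t, ⁅f i, y⁆ := by
  classical
  induction t using Finset.induction_on with
  | empty => simp
  | @insert a s ha ih => rw [Finset.sum_insert ha, Finset.sum_insert ha, add_lie, ih]

theorem finset_lie_sum {ι : Type*} (t : Finset ι) (f : ι → FA k X) (y : FA k X) :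
    ⁅y, ∑ i ∈ t, f i⁆ = ∑ i ∈ t, ⁅y, f i⁆ := by
  classical
  induction t using Finset.induction_on with
  | empty => simp
  | @insert a s ha ih => rw [Finset.sum_insert ha, Finset.sum_insert ha, lie_add, ih]

theorem brk (n : ℕ) : ∀ (m : ℕ) (p q : FreeMagma X), IsNLS p → IsNLS q →
    llt (mword q) (mword p) → (mword p).length + (mword q).length = n →
    imeas p q = m →
    ⁅evalM k p, evalM k q⁆ ∈ Submodule.span k (SP k (mword p ++ mword q)) := by
  induction n using Nat.strongRecOn with
  | ind n IHn =>
  intro m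
  induction m using Nat.strongRecOn with
  | ind m IHm =>
  intro p q hp hq hlt hn hm
  cases p with
  | of x =>
    rw [← evalM_mul_lie]
    exact Submodule.subset_span ⟨FreeMagma.mul (FreeMagma.of x) q,
      ⟨⟨trivial, hq, LS_concat (isLS_singleton x) (nls_isLS hq) hlt, trivial⟩,
        List.Perm.refl _⟩, rfl⟩
  | mul p1 p2 =>
    by_cases hc : llt (mword q) (mword p2)
    case neg =>
      rw [← evalM_mul_lie]
      exact Submodule.subset_span ⟨FreeMagma.mul (FreeMagma.mul p1 p2) q,
        ⟨⟨hp, hq, LS_concat (nls_isLS hp) (nls_isLS hq) hlt, hc⟩, List.Perm.refl _⟩, rfl⟩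
    case pos =>
      have hA : IsNLS p1 := hp.1
      have hB : IsNLS p2 := hp.2.1
      have hu1 : mword p1 ≠ [] := mword_ne_nil p1
      have hu2 : mword p2 ≠ [] := mword_ne_nil p2
      have hv : mword q ≠ [] := mword_ne_nil q
      have hULS : IsLS (mword p1 ++ mword p2) := nls_isLS hp
      have hzLS : IsLS ((mword p1 ++ mword p2) ++ mword q) :=
        LS_concat (nls_isLS hp) (nls_isLS hq) hlt
      have hn' : ((mword p1).length + (mword p2).length) + (mword q).length = n := by
        simpa only [mword_mul, List.length_append] using hn
      have hl1 : 0 < (mword p1).length := List.length_pos_iff.mpr hu1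
      have hl2 : 0 < (mword p2).length := List.length_pos_iff.mpr hu2
      simp only [mword_mul]
      rw [evalM_mul_lie]
      -- the common final step : apply the inner induction hypothesis
      have bstep : ∀ (r s : FreeMagma X), IsNLS r → IsNLS s → llt (mword s) (mword r) →
          (mword r ++ mword s).Perm ((mword p1 ++ mword p2) ++ mword q) →
          imeas r s < m →
          ⁅evalM k r, evalM k s⁆ ∈
            Submodule.span k (SP k ((mword p1 ++ mword p2) ++ mword q)) := by
        intro r s hr hs hrs hperm hless
        have hlen : (mword r).length + (mword s).length = n := by
          have h1 := hperm.length_eq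
          simp only [List.length_append] at h1
          omega
        have hres := IHm (imeas r s) hless r s hr hs hrs hlen rfl
        rwa [SP_congr k hperm] at hres
      -- processing a sum of NLS evaluations bracketed with p2 on the right
      have tstep : ∀ (x₀ : List X) (l : FreeMagma X →₀ k),
          (∀ s ∈ l.support, IsNLS s ∧ (mword s).Perm x₀) →
          (∀ s ∈ l.support, lle (mword s) x₀) →
          llt (x₀ ++ mword p2) ((mword p1 ++ mword p2) ++ mword q) →
          llt (mword p2 ++ x₀) ((mword p1 ++ mword p2) ++ mword q) →
          (x₀ ++ mword p2).Perm ((mword p1 ++ mword p2) ++ mword q) →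
          (mword p2 ++ x₀).Perm ((mword p1 ++ mword p2) ++ mword q) →
          ⁅l.sum fun s c => c • evalM k s, evalM k p2⁆ ∈
            Submodule.span k (SP k ((mword p1 ++ mword p2) ++ mword q)) := by
        intro x₀ l hl hbd hS1 hS2 hP1 hP2
        rw [Finsupp.sum, lie_finset_sum]
        apply Submodule.sum_mem
        intro s hs
        rw [smul_lie]
        apply Submodule.smul_mem
        rcases llt_trichotomy (mword s) (mword p2) with hsw | hsw | hsw
        · rw [← lie_skew]
          apply Submodule.neg_mem
          refine bstep p2 s hB (hl s hs).1 hsw ?_ ?_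
          · exact (List.Perm.append_left _ (hl s hs).2).trans hP2
          · rw [← hm]
            refine imeas_lt_of_llt ?_ ?_
            · exact (List.Perm.append_left _ (hl s hs).2).trans hP2
            · exact llt_of_lle_of_llt (lle_append (lle_refl _) rfl (hbd s hs)) hS2
        · rw [nls_mword_inj (hl s hs).1 hB hsw, lie_self]
          exact Submodule.zero_mem _
        · refine bstep s p2 (hl s hs).1 hB hsw ?_ ?_
          · exact ((hl s hs).2.append_right _).trans hP1
          · rw [← hm]
            refine imeas_lt_of_llt ?_ ?_
            · exact ((hl s hs).2.append_right _).trans hP1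
            · exact llt_of_lle_of_llt
                (lle_append (hbd s hs) (hl s hs).2.length_eq (lle_refl _)) hS1
      have jac : ⁅(⁅evalM k p1, evalM k p2⁆ : FA k X), evalM k q⁆
          = ⁅⁅evalM k p1, evalM k q⁆, evalM k p2⁆
            + ⁅evalM k p1, ⁅evalM k p2, evalM k q⁆⁆ := by
        have h := leibniz_lie (evalM k p1) (evalM k p2) (evalM k q)
        have h2 : -⁅evalM k p2, ⁅evalM k p1, evalM k q⁆⁆
            = ⁅⁅evalM k p1, evalM k q⁆, evalM k p2⁆ := lie_skew _ _
        calc ⁅(⁅evalM k p1, evalM k p2⁆ : FA k X), evalM k q⁆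
            = ⁅evalM k p1, ⁅evalM k p2, evalM k q⁆⁆
              - ⁅evalM k p2, ⁅evalM k p1, evalM k q⁆⁆ := by rw [h]; abel
          _ = _ := by rw [← h2]; abel
      rw [jac]
      refine Submodule.add_mem _ ?_ ?_
      · -- T1 : ⁅⁅A,C⁆, B⁆
        rcases llt_trichotomy (mword q) (mword p1) with hqp | hqp | hqp
        · -- v < u1, inner pair (p1, q)
          have hinner : ⁅evalM k p1, evalM k q⁆ ∈
              Submodule.span k (SP k (mword p1 ++ mword q)) :=
            IHn ((mword p1).length + (mword q).length) (by omega)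
              (imeas p1 q) p1 q hA hq hqp rfl rfl
          obtain ⟨l, hl, hrep⟩ := rep_of_mem_span k hinner
          have hbd : ∀ s ∈ l.support, lle (mword s) (mword p1 ++ mword q) := by
            apply rep_words_bounded hl
            intro m' hm'
            rw [← hrep] at hm'
            exact ((bounded_lie hA hq hqp) m' hm').2
          have hS1 : llt ((mword p1 ++ mword q) ++ mword p2)
              ((mword p1 ++ mword p2) ++ mword q) := by
            have h1 := (llt_append_left (mword p1)).mpr
              (llt_rot_concat (nls_isLS hB) (nls_isLS hq) hc)
            simpa only [mword_mul, List.append_assoc] using h1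
          have hS2 : llt (mword p2 ++ (mword p1 ++ mword q))
              ((mword p1 ++ mword p2) ++ mword q) := by
            have hr := hULS.2 (mword p1) (mword p2) hu1 hu2 rfl
            have h1 := llt_append_of_llt_left hr
              (by simp [List.length_append, Nat.add_comm]) (x := mword q) (y := mword q)
            simpa only [mword_mul, List.append_assoc] using h1
          have hP1 : ((mword p1 ++ mword q) ++ mword p2).Perm
              ((mword p1 ++ mword p2) ++ mword q) := by
            rw [List.append_assoc, List.append_assoc]
            exact List.Perm.append_left _ List.perm_append_comm
          have hP2 : (mword p2 ++ (mword p1 ++ mword q)).Perm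
              ((mword p1 ++ mword p2) ++ mword q) :=
            (List.perm_append_comm).trans hP1
          rw [hrep]
          exact tstep (mword p1 ++ mword q) l hl hbd hS1 hS2 hP1 hP2
        · -- mword q = mword p1
          rw [nls_mword_inj hq hA hqp, lie_self, zero_lie]
          exact Submodule.zero_mem _
        · -- u1 < v, inner pair (q, p1)
          have hinner : ⁅evalM k q, evalM k p1⁆ ∈
              Submodule.span k (SP k (mword q ++ mword p1)) :=
            IHn ((mword q).length + (mword p1).length) (by omega)
              (imeas q p1) q p1 hq hA hqp rfl rfl
          obtain ⟨l, hl, hrep⟩ := rep_of_mem_span k hinner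
          have hbd : ∀ s ∈ l.support, lle (mword s) (mword q ++ mword p1) := by
            apply rep_words_bounded hl
            intro m' hm'
            rw [← hrep] at hm'
            exact ((bounded_lie hq hA hqp) m' hm').2
          have hS1 : llt ((mword q ++ mword p1) ++ mword p2)
              ((mword p1 ++ mword p2) ++ mword q) := by
            have h1 := hzLS.2 (mword p1 ++ mword p2) (mword q) (by simp [hu1]) hv rfl
            simpa only [mword_mul, List.append_assoc] using h1
          have hS2 : llt (mword p2 ++ (mword q ++ mword p1))
              ((mword p1 ++ mword p2) ++ mword q) := by
            have h1 := hzLS.2 (mword p1) (mword p2 ++ mword q) hu1 (by simp [hu2])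
              (List.append_assoc _ _ _)
            simpa only [mword_mul, List.append_assoc] using h1
          have hP1 : ((mword q ++ mword p1) ++ mword p2).Perm
              ((mword p1 ++ mword p2) ++ mword q) := by
            rw [List.append_assoc]
            exact List.perm_append_comm
          have hP2 : (mword p2 ++ (mword q ++ mword p1)).Perm
              ((mword p1 ++ mword p2) ++ mword q) :=
            (List.perm_append_comm).trans hP1
          rw [show (⁅evalM k p1, evalM k q⁆ : FA k X) = -⁅evalM k q, evalM k p1⁆ from
            (lie_skew _ _).symm]
          rw [neg_lie]
          apply Submodule.neg_mem
          rw [hrep]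
          exact tstep (mword q ++ mword p1) l hl hbd hS1 hS2 hP1 hP2
      · -- T2 : ⁅A, ⁅B,C⁆⁆
        have hinner : ⁅evalM k p2, evalM k q⁆ ∈
            Submodule.span k (SP k (mword p2 ++ mword q)) :=
          IHn ((mword p2).length + (mword q).length) (by omega)
            (imeas p2 q) p2 q hB hq hc rfl rfl
        obtain ⟨l, hl, hrep⟩ := rep_of_mem_span k hinner
        have hbd : ∀ s ∈ l.support, lle (mword s) (mword p2 ++ mword q) := by
          apply rep_words_bounded hl
          intro m' hm'
          rw [← hrep] at hm'
          exact ((bounded_lie hB hq hc) m' hm').2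
        rw [hrep, Finsupp.sum, finset_lie_sum]
        apply Submodule.sum_mem
        intro s hs
        rw [lie_smul (l s)]
        apply Submodule.smul_mem
        rcases llt_trichotomy (mword s) (mword p1) with hsw | hsw | hsw
        · -- pair (p1, s)
          have hperm1 : (mword p1 ++ mword s).Perm ((mword p1 ++ mword p2) ++ mword q) := by
            have h1 : (mword p1 ++ mword s).Perm (mword p1 ++ (mword p2 ++ mword q)) :=
              List.Perm.append_left _ (hl s hs).2
            simpa only [mword_mul, List.append_assoc] using h1
          refine bstep p1 s hA (hl s hs).1 hsw hperm1 ?_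
          rw [← hm]
          rcases (hbd s hs) with hlt' | heq'
          · refine imeas_lt_of_llt hperm1 ?_
            have h1 := (llt_append_left (mword p1)).mpr hlt'
            simpa only [mword_mul, List.append_assoc] using h1
          · refine imeas_lt_of_left ?_ ?_
            · rw [heq']
              simp only [mword_mul, List.append_assoc]
            · simp only [mword_mul, List.length_append]
              omega
        · rw [nls_mword_inj (hl s hs).1 hA hsw, lie_self]
          exact Submodule.zero_mem _
        · -- pair (s, p1)
          have hperm1 : (mword s ++ mword p1).Perm ((mword p1 ++ mword p2) ++ mword q) := by
            refine ((hl s hs).2.append_right _).trans ?_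
            have h1 : ((mword p2 ++ mword q) ++ mword p1).Perm
                (mword p1 ++ (mword p2 ++ mword q)) := List.perm_append_comm
            simpa only [mword_mul, List.append_assoc] using h1
          rw [← lie_skew]
          apply Submodule.neg_mem
          refine bstep s p1 (hl s hs).1 hA hsw hperm1 ?_
          rw [← hm]
          refine imeas_lt_of_llt hperm1 ?_
          have hrot := hzLS.2 (mword p1) (mword p2 ++ mword q) hu1 (by simp [hu2])
            (List.append_assoc _ _ _)
          exact llt_of_lle_of_llt
            (lle_append (hbd s hs) (hl s hs).2.length_eq (lle_refl _)) hrot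

theorem key (t : FreeMagma X) : evalM k t ∈ Submodule.span k (SP k (mword t)) := by
  induction t using FreeMagma.rec with
  | of x => exact Submodule.subset_span ⟨FreeMagma.of x, ⟨trivial, List.Perm.refl _⟩, rfl⟩
  | mul a b iha ihb =>
    rw [evalM_mul_lie]
    refine lie_mem_span_of iha ihb ?_
    rintro _ ⟨p, ⟨hp, hpperm⟩, rfl⟩ _ ⟨q, ⟨hq, hqperm⟩, rfl⟩
    rcases llt_trichotomy (mword q) (mword p) with h | h | h
    · have hres := brk k ((mword p).length + (mword q).length) (imeas p q) p q hp hq h rfl rfl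
      rwa [SP_congr k (hpperm.append hqperm)] at hres
    · rw [nls_mword_inj hq hp h, lie_self]
      exact Submodule.zero_mem _
    · rw [← lie_skew]
      apply Submodule.neg_mem
      have hres := brk k ((mword q).length + (mword p).length) (imeas q p) q p hq hp h rfl rfl
      rwa [SP_congr k ((hqperm.append hpperm).trans List.perm_append_comm)] at hres

end Part5
/-! ### Part 6 : the main theorem -/

section Part6

variable {X : Type*} [LinearOrder X] (k : Type*) [Field k]

/-- the linear span of all bracketed words, as a Lie subalgebra -/
def evalSpan : LieSubalgebra k (FA k X) :=
  { Submodule.span k (Set.range (evalM k)) with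
    lie_mem' := fun {x y} hx hy => by
      refine lie_mem_span_of hx hy ?_
      rintro _ ⟨t, rfl⟩ _ ⟨t', rfl⟩
      rw [← evalM_mul_lie]
      exact Submodule.subset_span ⟨FreeMagma.mul t t', rfl⟩ }

theorem mem_evalSpan_of_lieSpan {f : FA k X}
    (hf : f ∈ LieSubalgebra.lieSpan k (FA k X) (gens k)) :
    f ∈ Submodule.span k (Set.range (evalM k)) := by
  have hle := LieSubalgebra.lieSpan_le (K := evalSpan (X := X) k) (s := gens k)
  refine (hle.mpr ?_) hf
  rintro _ ⟨x, rfl⟩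
  exact Submodule.subset_span ⟨FreeMagma.of x, rfl⟩

theorem mem_span_nls {f : FA k X} (hf : f ∈ Submodule.span k (Set.range (evalM k))) :
    f ∈ Submodule.span k (evalM k '' {s : FreeMagma X | IsNLS s}) := by
  refine Submodule.span_le.mpr ?_ hf
  rintro _ ⟨t, rfl⟩
  refine Submodule.span_mono ?_ (key k t)
  exact Set.image_mono (fun s hs => hs.1)

end Part6

/-- For every nonzero Lie element `f` of the free associative algebra (an element
of the Lie subalgebra generated by X under commutators), the deg-lex leading
monomial of `f` is an associative Lyndon--Shirshov word. -/
theorem stmt_6 (f : FA k X) (hf : f ∈ LieSubalgebra.lieSpan k (FA k X) (gens k))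
    (hf0 : f ≠ 0) (w : List X) (hw : IsLeading k f w) : IsLS w := by
  have hf1 : f ∈ Submodule.span k (evalM k '' {s : FreeMagma X | IsNLS s}) :=
    mem_span_nls k (mem_evalSpan_of_lieSpan k hf)
  obtain ⟨l, hl, hrep⟩ := rep_of_mem_span k hf1
  have hsupp : l.support.Nonempty := by
    by_contra hempty
    rw [Finset.not_nonempty_iff_eq_empty] at hempty
    apply hf0
    rw [hrep, Finsupp.sum, hempty, Finset.sum_empty]
  obtain ⟨s₀, hs₀, hmax⟩ :=
    finset_exists_max dle dle_total (fun h1 h2 => dle_trans h1 h2) l.support mword hsupp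
  have happly : ∀ v : List X, f.coeff (FreeMonoid.ofList v) =
      ∑ s ∈ l.support, l s * (evalM k s).coeff (FreeMonoid.ofList v) := by
    intro v
    rw [hrep, Finsupp.sum, MonoidAlgebra.coeff_sum, Finsupp.finset_sum_apply]
    apply Finset.sum_congr rfl
    intro s hs
    rw [MonoidAlgebra.coeff_smul_apply, smul_eq_mul]
  have hw0 : f.coeff (FreeMonoid.ofList (mword s₀)) = l s₀ := by
    rw [happly, Finset.sum_eq_single s₀]
    · rw [(evalM_nls (hl s₀ hs₀)).2, mul_one]
    · intro t ht htne
      have h0 : (evalM k t).coeff (FreeMonoid.ofList (mword s₀)) = 0 := by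
        by_contra hcne
        have h1 := (evalM_nls (hl t ht)).1 (mword s₀) hcne
        have h2 : dle (mword s₀) (mword t) := dle_of_lle h1.2 h1.1.length_eq
        have h3 := hmax t ht
        have h4 : mword t = mword s₀ := by
          rcases h2 with h2 | h2
          · rcases h3 with h3 | h3
            · exact absurd h3 (dlt_asymm h2)
            · exact h3
          · exact h2.symm
        exact htne (nls_mword_inj (hl t ht) (hl s₀ hs₀) h4)
      rw [h0, mul_zero]
    · intro hno
      exact absurd hs₀ hno
  have hw0ne : f.coeff (FreeMonoid.ofList (mword s₀)) ≠ 0 := by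
    rw [hw0]
    exact Finsupp.mem_support_iff.mp hs₀
  have hbound : ∀ v : List X, f.coeff (FreeMonoid.ofList v) ≠ 0 → dle v (mword s₀) := by
    intro v hv
    rw [happly] at hv
    obtain ⟨s, hs, hsne⟩ := Finset.exists_ne_zero_of_sum_ne_zero hv
    have hev : (evalM k s).coeff (FreeMonoid.ofList v) ≠ 0 := by
      intro h0
      rw [h0, mul_zero] at hsne
      exact hsne rfl
    have h1 := (evalM_nls (hl s hs)).1 v hev
    exact dle_trans (dle_of_lle h1.2 h1.1.length_eq) (hmax s hs)
  have hwe : w = mword s₀ := by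
    have h1 := hw.2 (mword s₀) hw0ne
    have h2 := hbound w hw.1
    rcases h1 with h1 | h1
    · exact h1.symm
    · rcases h2 with h2 | h2
      · exact absurd h1 (dlt_asymm h2)
      · exact h2
  rw [hwe]
  exact nls_isLS (hl s₀ hs₀)
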